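/- Let f₁, f₂: ℤⁿ → ℝ be defined by fᵢ(σ) = Aᵢ·∏ⱼ B_{i,j}^{σⱼ} where B_{i,j} = (bᵢ−αⱼ)/(cᵢ−αⱼ), and set Z = (b₁−b₂)(c₁−c₂)/((b₁−c₂)(c₁−b₂)). Then τ(σ) = 1 + f₁(σ) + f₂(σ) + Z·f₁(σ)f₂(σ) satisfies the Hirota bilinear difference equation (αᵢ−αⱼ)τ(σ+eₖ)τ(σ+eᵢ+eⱼ) + (αⱼ−αₖ)τ(σ+eᵢ)τ(σ+eⱼ+eₖ) + (αₖ−αᵢ)τ(σ+eⱼ)τ(σ+eᵢ+eₖ) = 0 for all σ and distinct i,j,k. -/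
import Mathlib

theorem atomLA (b c x y z p₁ p₂ p₃ : ℝ)
    (hx : c - x ≠ 0) (hy : c - y ≠ 0) (hz : c - z ≠ 0)
    (hp₁ : p₁*(c-x) = b-x) (hp₂ : p₂*(c-y) = b-y) (hp₃ : p₃*(c-z) = b-z) :
    (x-y)*(p₃+p₁*p₂) + (y-z)*(p₁+p₂*p₃) + (z-x)*(p₂+p₁*p₃) = 0 := by
  have hD : (c-x)*((c-y)*(c-z)) ≠ 0 := mul_ne_zero hx (mul_ne_zero hy hz)
  have key : ((x-y)*(p₃+p₁*p₂) + (y-z)*(p₁+p₂*p₃) + (z-x)*(p₂+p₁*p₃))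
      * ((c-x)*((c-y)*(c-z))) = 0 := by
    linear_combination ((x-y)*(c-x)*(c-y)) * hp₃ + ((x-y)*(c-z)*(b-y)) * hp₁
      + ((x-y)*(c-z)*(p₁*(c-x))) * hp₂
      + ((y-z)*(c-y)*(c-z)) * hp₁ + ((y-z)*(c-x)*(b-z)) * hp₂
      + ((y-z)*(c-x)*(p₂*(c-y))) * hp₃
      + ((z-x)*(c-x)*(c-z)) * hp₂ + ((z-x)*(c-y)*(b-z)) * hp₁
      + ((z-x)*(c-y)*(p₁*(c-x))) * hp₃
  exact (mul_eq_zero.mp key).resolve_right hD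

set_option maxHeartbeats 2000000 in
theorem atomLB0 (b₁ b₂ c₁ c₂ x y p₁ p₂ p₃ q₁ q₂ q₃ Z : ℝ)
    (hx1 : c₁ - x ≠ 0) (hy1 : c₁ - y ≠ 0) (hz1 : c₁ ≠ 0)
    (hx2 : c₂ - x ≠ 0) (hy2 : c₂ - y ≠ 0) (hz2 : c₂ ≠ 0)
    (hbc : b₁ - c₂ ≠ 0) (hcb : c₁ - b₂ ≠ 0)
    (hp₁ : p₁*(c₁-x) = b₁-x) (hp₂ : p₂*(c₁-y) = b₁-y) (hp₃ : p₃*c₁ = b₁)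
    (hq₁ : q₁*(c₂-x) = b₂-x) (hq₂ : q₂*(c₂-y) = b₂-y) (hq₃ : q₃*c₂ = b₂)
    (hZ : Z*((b₁-c₂)*(c₁-b₂)) = (b₁-b₂)*(c₁-c₂)) :
    (x-y)*(p₃*q₁*q₂ + q₃*p₁*p₂ + Z*(p₃*q₃ + p₁*p₂*q₁*q₂))
    + y*(p₁*q₂*q₃ + q₁*p₂*p₃ + Z*(p₁*q₁ + p₂*p₃*q₂*q₃))
    + (-x)*(p₂*q₁*q₃ + q₂*p₁*p₃ + Z*(p₂*q₂ + p₁*p₃*q₁*q₃)) = 0 := by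
  have hD : (c₁-x)*((c₁-y)*(c₁*((c₂-x)*((c₂-y)*(c₂*((b₁-c₂)*(c₁-b₂))))))) ≠ 0 :=
    mul_ne_zero hx1 (mul_ne_zero hy1 (mul_ne_zero hz1 (mul_ne_zero hx2 (mul_ne_zero hy2
      (mul_ne_zero hz2 (mul_ne_zero hbc hcb))))))
  have key : ((x-y)*(p₃*q₁*q₂ + q₃*p₁*p₂ + Z*(p₃*q₃ + p₁*p₂*q₁*q₂))
      + y*(p₁*q₂*q₃ + q₁*p₂*p₃ + Z*(p₁*q₁ + p₂*p₃*q₂*q₃))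
      + (-x)*(p₂*q₁*q₃ + q₂*p₁*p₃ + Z*(p₂*q₂ + p₁*p₃*q₁*q₃)))
      * ((c₁-x)*((c₁-y)*(c₁*((c₂-x)*((c₂-y)*(c₂*((b₁-c₂)*(c₁-b₂)))))))) = 0 := by
    linear_combination ((x-y)*(c₁-x)*(c₁-y)*c₂*((b₁-c₂)*(c₁-b₂))*(b₂-x)*(b₂-y)) * hp₃
      + ((x-y)*(c₁-x)*(c₁-y)*c₂*((b₁-c₂)*(c₁-b₂))*(p₃*c₁)*(b₂-y)) * hq₁
      + ((x-y)*(c₁-x)*(c₁-y)*c₂*((b₁-c₂)*(c₁-b₂))*(p₃*c₁)*(q₁*(c₂-x))) * hq₂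
      + ((x-y)*(c₂-x)*(c₂-y)*c₁*((b₁-c₂)*(c₁-b₂))*(b₁-x)*(b₁-y)) * hq₃
      + ((x-y)*(c₂-x)*(c₂-y)*c₁*((b₁-c₂)*(c₁-b₂))*(q₃*c₂)*(b₁-y)) * hp₁
      + ((x-y)*(c₂-x)*(c₂-y)*c₁*((b₁-c₂)*(c₁-b₂))*(q₃*c₂)*(p₁*(c₁-x))) * hp₂
      + ((x-y)*(c₁-x)*(c₁-y)*(c₂-x)*(c₂-y)*b₁*b₂) * hZ
      + ((x-y)*(c₁-x)*(c₁-y)*(c₂-x)*(c₂-y)*(Z*((b₁-c₂)*(c₁-b₂)))*b₂) * hp₃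
      + ((x-y)*(c₁-x)*(c₁-y)*(c₂-x)*(c₂-y)*(Z*((b₁-c₂)*(c₁-b₂)))*(p₃*c₁)) * hq₃
      + ((x-y)*c₁*c₂*(b₁-x)*(b₁-y)*(b₂-x)*(b₂-y)) * hZ
      + ((x-y)*c₁*c₂*(Z*((b₁-c₂)*(c₁-b₂)))*(b₁-y)*(b₂-x)*(b₂-y)) * hp₁
      + ((x-y)*c₁*c₂*(Z*((b₁-c₂)*(c₁-b₂)))*(p₁*(c₁-x))*(b₂-x)*(b₂-y)) * hp₂
      + ((x-y)*c₁*c₂*(Z*((b₁-c₂)*(c₁-b₂)))*(p₁*(c₁-x))*(p₂*(c₁-y))*(b₂-y)) * hq₁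
      + ((x-y)*c₁*c₂*(Z*((b₁-c₂)*(c₁-b₂)))*(p₁*(c₁-x))*(p₂*(c₁-y))*(q₁*(c₂-x))) * hq₂
      + (y*(c₁-y)*c₁*(c₂-x)*((b₁-c₂)*(c₁-b₂))*(b₂-y)*b₂) * hp₁
      + (y*(c₁-y)*c₁*(c₂-x)*((b₁-c₂)*(c₁-b₂))*(p₁*(c₁-x))*b₂) * hq₂
      + (y*(c₁-y)*c₁*(c₂-x)*((b₁-c₂)*(c₁-b₂))*(p₁*(c₁-x))*(q₂*(c₂-y))) * hq₃
      + (y*(c₂-y)*c₂*(c₁-x)*((b₁-c₂)*(c₁-b₂))*(b₁-y)*b₁) * hq₁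
      + (y*(c₂-y)*c₂*(c₁-x)*((b₁-c₂)*(c₁-b₂))*(q₁*(c₂-x))*b₁) * hp₂
      + (y*(c₂-y)*c₂*(c₁-x)*((b₁-c₂)*(c₁-b₂))*(q₁*(c₂-x))*(p₂*(c₁-y))) * hp₃
      + (y*(c₁-y)*c₁*(c₂-y)*c₂*(b₁-x)*(b₂-x)) * hZ
      + (y*(c₁-y)*c₁*(c₂-y)*c₂*(Z*((b₁-c₂)*(c₁-b₂)))*(b₂-x)) * hp₁
      + (y*(c₁-y)*c₁*(c₂-y)*c₂*(Z*((b₁-c₂)*(c₁-b₂)))*(p₁*(c₁-x))) * hq₁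
      + (y*(c₁-x)*(c₂-x)*(b₁-y)*b₁*(b₂-y)*b₂) * hZ
      + (y*(c₁-x)*(c₂-x)*(Z*((b₁-c₂)*(c₁-b₂)))*b₁*(b₂-y)*b₂) * hp₂
      + (y*(c₁-x)*(c₂-x)*(Z*((b₁-c₂)*(c₁-b₂)))*(p₂*(c₁-y))*(b₂-y)*b₂) * hp₃
      + (y*(c₁-x)*(c₂-x)*(Z*((b₁-c₂)*(c₁-b₂)))*(p₂*(c₁-y))*(p₃*c₁)*b₂) * hq₂
      + (y*(c₁-x)*(c₂-x)*(Z*((b₁-c₂)*(c₁-b₂)))*(p₂*(c₁-y))*(p₃*c₁)*(q₂*(c₂-y))) * hq₃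
      + ((-x)*c₁*(c₁-x)*(c₂-y)*((b₁-c₂)*(c₁-b₂))*b₂*(b₂-x)) * hp₂
      + ((-x)*c₁*(c₁-x)*(c₂-y)*((b₁-c₂)*(c₁-b₂))*(p₂*(c₁-y))*(b₂-x)) * hq₃
      + ((-x)*c₁*(c₁-x)*(c₂-y)*((b₁-c₂)*(c₁-b₂))*(p₂*(c₁-y))*(q₃*c₂)) * hq₁
      + ((-x)*c₂*(c₂-x)*(c₁-y)*((b₁-c₂)*(c₁-b₂))*b₁*(b₁-x)) * hq₂
      + ((-x)*c₂*(c₂-x)*(c₁-y)*((b₁-c₂)*(c₁-b₂))*(q₂*(c₂-y))*(b₁-x)) * hp₃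
      + ((-x)*c₂*(c₂-x)*(c₁-y)*((b₁-c₂)*(c₁-b₂))*(q₂*(c₂-y))*(p₃*c₁)) * hp₁
      + ((-x)*c₁*(c₁-x)*c₂*(c₂-x)*(b₁-y)*(b₂-y)) * hZ
      + ((-x)*c₁*(c₁-x)*c₂*(c₂-x)*(Z*((b₁-c₂)*(c₁-b₂)))*(b₂-y)) * hp₂
      + ((-x)*c₁*(c₁-x)*c₂*(c₂-x)*(Z*((b₁-c₂)*(c₁-b₂)))*(p₂*(c₁-y))) * hq₂
      + ((-x)*(c₁-y)*(c₂-y)*b₁*(b₁-x)*b₂*(b₂-x)) * hZ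
      + ((-x)*(c₁-y)*(c₂-y)*(Z*((b₁-c₂)*(c₁-b₂)))*(b₁-x)*b₂*(b₂-x)) * hp₃
      + ((-x)*(c₁-y)*(c₂-y)*(Z*((b₁-c₂)*(c₁-b₂)))*(p₃*c₁)*b₂*(b₂-x)) * hp₁
      + ((-x)*(c₁-y)*(c₂-y)*(Z*((b₁-c₂)*(c₁-b₂)))*(p₃*c₁)*(p₁*(c₁-x))*(b₂-x)) * hq₃
      + ((-x)*(c₁-y)*(c₂-y)*(Z*((b₁-c₂)*(c₁-b₂)))*(p₃*c₁)*(p₁*(c₁-x))*(q₃*c₂)) * hq₁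
  exact (mul_eq_zero.mp key).resolve_right hD

theorem atomKEY (x y z F₁ F₂ p₁ p₂ p₃ q₁ q₂ q₃ Z : ℝ)
    (hP : (x-y)*(p₃+p₁*p₂) + (y-z)*(p₁+p₂*p₃) + (z-x)*(p₂+p₁*p₃) = 0)
    (hQ : (x-y)*(q₃+q₁*q₂) + (y-z)*(q₁+q₂*q₃) + (z-x)*(q₂+q₁*q₃) = 0)
    (hB : (x-y)*(p₃*q₁*q₂ + q₃*p₁*p₂ + Z*(p₃*q₃ + p₁*p₂*q₁*q₂))
      + (y-z)*(p₁*q₂*q₃ + q₁*p₂*p₃ + Z*(p₁*q₁ + p₂*p₃*q₂*q₃))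
      + (z-x)*(p₂*q₁*q₃ + q₂*p₁*p₃ + Z*(p₂*q₂ + p₁*p₃*q₁*q₃)) = 0) :
    (x-y) * (1 + F₁*p₃ + F₂*q₃ + Z*(F₁*p₃)*(F₂*q₃))
        * (1 + F₁*(p₁*p₂) + F₂*(q₁*q₂) + Z*(F₁*(p₁*p₂))*(F₂*(q₁*q₂)))
    + (y-z) * (1 + F₁*p₁ + F₂*q₁ + Z*(F₁*p₁)*(F₂*q₁))
        * (1 + F₁*(p₂*p₃) + F₂*(q₂*q₃) + Z*(F₁*(p₂*p₃))*(F₂*(q₂*q₃)))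
    + (z-x) * (1 + F₁*p₂ + F₂*q₂ + Z*(F₁*p₂)*(F₂*q₂))
        * (1 + F₁*(p₁*p₃) + F₂*(q₁*q₃) + Z*(F₁*(p₁*p₃))*(F₂*(q₁*q₃))) = 0 := by
  linear_combination (F₁ + Z*q₁*q₂*q₃*F₁*F₂^2) * hP + (F₂ + Z*p₁*p₂*p₃*F₁^2*F₂) * hQ
    + (F₁*F₂) * hB

/-- The 2-soliton ansatz `τ = 1 + f₁ + f₂ + Z f₁ f₂` with
`fᵢ(σ) = Aᵢ ∏ⱼ B_{i,j}^{σⱼ}`, `B_{i,j} = (bᵢ-αⱼ)/(cᵢ-αⱼ)`, and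
`Z = (b₁-b₂)(c₁-c₂)/((b₁-c₂)(c₁-b₂))` satisfies the Hirota bilinear
difference equation. -/
theorem two_soliton_BHZ (n : ℕ) (α : Fin n → ℝ) (hα : Function.Injective α)
    (b₁ b₂ c₁ c₂ A₁ A₂ : ℝ)
    (hb₁ : ∀ j, b₁ ≠ α j) (hb₂ : ∀ j, b₂ ≠ α j)
    (hc₁ : ∀ j, c₁ ≠ α j) (hc₂ : ∀ j, c₂ ≠ α j)
    (hb₁c₂ : b₁ ≠ c₂) (hc₁b₂ : c₁ ≠ b₂)
    (B₁ B₂ : Fin n → ℝ)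
    (hB₁ : ∀ j, B₁ j = (b₁ - α j) / (c₁ - α j))
    (hB₂ : ∀ j, B₂ j = (b₂ - α j) / (c₂ - α j))
    (f₁ f₂ : (Fin n → ℤ) → ℝ)
    (hf₁ : ∀ σ, f₁ σ = A₁ * ∏ l, B₁ l ^ σ l)
    (hf₂ : ∀ σ, f₂ σ = A₂ * ∏ l, B₂ l ^ σ l)
    (Z : ℝ) (hZ : Z = (b₁ - b₂) * (c₁ - c₂) / ((b₁ - c₂) * (c₁ - b₂)))
    (τ : (Fin n → ℤ) → ℝ)
    (hτ : ∀ σ, τ σ = 1 + f₁ σ + f₂ σ + Z * f₁ σ * f₂ σ)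
    (σ : Fin n → ℤ) (i j k : Fin n) (hij : i ≠ j) (hjk : j ≠ k) (hik : i ≠ k) :
    (α i - α j) * τ (σ + Pi.single k 1) * τ (σ + Pi.single i 1 + Pi.single j 1)
      + (α j - α k) * τ (σ + Pi.single i 1) * τ (σ + Pi.single j 1 + Pi.single k 1)
      + (α k - α i) * τ (σ + Pi.single j 1) * τ (σ + Pi.single i 1 + Pi.single k 1) = 0 := by
  have hc₁' : ∀ l, c₁ - α l ≠ 0 := fun l => sub_ne_zero_of_ne (hc₁ l)
  have hc₂' : ∀ l, c₂ - α l ≠ 0 := fun l => sub_ne_zero_of_ne (hc₂ l)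
  have hb₁' : ∀ l, b₁ - α l ≠ 0 := fun l => sub_ne_zero_of_ne (hb₁ l)
  have hb₂' : ∀ l, b₂ - α l ≠ 0 := fun l => sub_ne_zero_of_ne (hb₂ l)
  have hB₁ne : ∀ l, B₁ l ≠ 0 := fun l => by
    rw [hB₁ l]; exact div_ne_zero (hb₁' l) (hc₁' l)
  have hB₂ne : ∀ l, B₂ l ≠ 0 := fun l => by
    rw [hB₂ l]; exact div_ne_zero (hb₂' l) (hc₂' l)
  -- product shift lemma
  have hprod : ∀ (B : Fin n → ℝ), (∀ l, B l ≠ 0) → ∀ (σ' : Fin n → ℤ) (m : Fin n),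
      (∏ l, B l ^ ((σ' + Pi.single m 1 : Fin n → ℤ) l)) = (∏ l, B l ^ σ' l) * B m := by
    intro B hB σ' m
    have h1 : ∀ l ∈ Finset.univ, B l ^ ((σ' + Pi.single m 1 : Fin n → ℤ) l)
        = B l ^ σ' l * B l ^ ((Pi.single m 1 : Fin n → ℤ) l) := by
      intro l _
      rw [Pi.add_apply, zpow_add₀ (hB l)]
    rw [Finset.prod_congr rfl h1, Finset.prod_mul_distrib]
    congr 1
    rw [Finset.prod_eq_single m
      (fun l _ hl => by rw [Pi.single_eq_of_ne hl, zpow_zero])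
      (fun h => absurd (Finset.mem_univ m) h)]
    rw [Pi.single_eq_same, zpow_one]
  have hf₁s : ∀ (σ' : Fin n → ℤ) (m : Fin n), f₁ (σ' + Pi.single m 1) = f₁ σ' * B₁ m := by
    intro σ' m
    rw [hf₁, hf₁, hprod B₁ hB₁ne, mul_assoc]
  have hf₂s : ∀ (σ' : Fin n → ℤ) (m : Fin n), f₂ (σ' + Pi.single m 1) = f₂ σ' * B₂ m := by
    intro σ' m
    rw [hf₂, hf₂, hprod B₂ hB₂ne, mul_assoc]
  have hτ1 : ∀ m : Fin n, τ (σ + Pi.single m 1)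
      = 1 + f₁ σ * B₁ m + f₂ σ * B₂ m + Z * (f₁ σ * B₁ m) * (f₂ σ * B₂ m) := by
    intro m
    rw [hτ, hf₁s, hf₂s]
  have hτ2 : ∀ m m' : Fin n, τ (σ + Pi.single m 1 + Pi.single m' 1)
      = 1 + f₁ σ * (B₁ m * B₁ m') + f₂ σ * (B₂ m * B₂ m')
        + Z * (f₁ σ * (B₁ m * B₁ m')) * (f₂ σ * (B₂ m * B₂ m')) := by
    intro m m'
    rw [hτ, hf₁s, hf₁s, hf₂s, hf₂s]
    ring
  -- relations
  have hrp : ∀ l, B₁ l * (c₁ - α l) = b₁ - α l := fun l => by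
    rw [hB₁ l]; exact div_mul_cancel₀ _ (hc₁' l)
  have hrq : ∀ l, B₂ l * (c₂ - α l) = b₂ - α l := fun l => by
    rw [hB₂ l]; exact div_mul_cancel₀ _ (hc₂' l)
  have hbc : b₁ - c₂ ≠ 0 := sub_ne_zero_of_ne hb₁c₂
  have hcb : c₁ - b₂ ≠ 0 := sub_ne_zero_of_ne hc₁b₂
  have hrZ : Z * ((b₁ - c₂) * (c₁ - b₂)) = (b₁ - b₂) * (c₁ - c₂) := by
    rw [hZ]; exact div_mul_cancel₀ _ (mul_ne_zero hbc hcb)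
  have hP := atomLA b₁ c₁ (α i) (α j) (α k) (B₁ i) (B₁ j) (B₁ k)
    (hc₁' i) (hc₁' j) (hc₁' k) (hrp i) (hrp j) (hrp k)
  have hQ := atomLA b₂ c₂ (α i) (α j) (α k) (B₂ i) (B₂ j) (B₂ k)
    (hc₂' i) (hc₂' j) (hc₂' k) (hrq i) (hrq j) (hrq k)
  have hB : (α i - α j)*(B₁ k*B₂ i*B₂ j + B₂ k*B₁ i*B₁ j + Z*(B₁ k*B₂ k + B₁ i*B₁ j*B₂ i*B₂ j))
      + (α j - α k)*(B₁ i*B₂ j*B₂ k + B₂ i*B₁ j*B₁ k + Z*(B₁ i*B₂ i + B₁ j*B₁ k*B₂ j*B₂ k))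
      + (α k - α i)*(B₁ j*B₂ i*B₂ k + B₂ j*B₁ i*B₁ k + Z*(B₁ j*B₂ j + B₁ i*B₁ k*B₂ i*B₂ k)) = 0 := by
    have e1 : (c₁ - α k) - (α i - α k) ≠ 0 := by
      have e : (c₁ - α k) - (α i - α k) = c₁ - α i := by ring
      rw [e]; exact hc₁' i
    have e2 : (c₁ - α k) - (α j - α k) ≠ 0 := by
      have e : (c₁ - α k) - (α j - α k) = c₁ - α j := by ring
      rw [e]; exact hc₁' j
    have e3 : (c₂ - α k) - (α i - α k) ≠ 0 := by
      have e : (c₂ - α k) - (α i - α k) = c₂ - α i := by ring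
      rw [e]; exact hc₂' i
    have e4 : (c₂ - α k) - (α j - α k) ≠ 0 := by
      have e : (c₂ - α k) - (α j - α k) = c₂ - α j := by ring
      rw [e]; exact hc₂' j
    have e5 : (b₁ - α k) - (c₂ - α k) ≠ 0 := by
      have e : (b₁ - α k) - (c₂ - α k) = b₁ - c₂ := by ring
      rw [e]; exact hbc
    have e6 : (c₁ - α k) - (b₂ - α k) ≠ 0 := by
      have e : (c₁ - α k) - (b₂ - α k) = c₁ - b₂ := by ring
      rw [e]; exact hcb
    have h0 := atomLB0 (b₁ - α k) (b₂ - α k) (c₁ - α k) (c₂ - α k)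
      (α i - α k) (α j - α k) (B₁ i) (B₁ j) (B₁ k) (B₂ i) (B₂ j) (B₂ k) Z
      e1 e2 (hc₁' k) e3 e4 (hc₂' k) e5 e6
      (by linear_combination hrp i) (by linear_combination hrp j) (hrp k)
      (by linear_combination hrq i) (by linear_combination hrq j) (hrq k)
      (by linear_combination hrZ)
    linear_combination h0
  have main := atomKEY (α i) (α j) (α k) (f₁ σ) (f₂ σ) (B₁ i) (B₁ j) (B₁ k)
    (B₂ i) (B₂ j) (B₂ k) Z hP hQ hB
  rw [hτ1 i, hτ1 j, hτ1 k, hτ2 i j, hτ2 j k, hτ2 i k]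
  linear_combination main
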